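/- Let d ≥ 1 and let Θ be a d×d real symmetric positive definite matrix. Suppose there exists a permutation σ of {1,…,d} such that the permuted matrix Θ' with entries Θ'_{ij} = Θ_{σ(i)σ(j)} has the identity ordering as a perfect elimination ordering, i.e., for all i < j < k, Θ'_{ji} ≠ 0 and Θ'_{ki} ≠ 0 imply Θ'_{kj} ≠ 0 (this holds whenever the support graph of Θ is chordal). Then Θ admits a support-constrained decomposition with a DAG factor: there exist a d×d real matrix B with zero diagonal, supported on a DAG, with supp(B) ⊆ supp(Θ), and a diagonal matrix D with strictly positive diagonal entries, such that Θ = (I − B) D (I − B)ᵀ. -/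

import Mathlib

open Matrix

private lemma posdef_diag_pos {n : ℕ} {M : Matrix (Fin n) (Fin n) ℝ} (hM : M.PosDef)
    (i : Fin n) : 0 < M i i := by
  have := hM.dotProduct_mulVec_pos (x := Pi.single i 1) (by simp [Function.ne_iff])
  simpa [dotProduct, mulVec, Pi.single_apply, Finset.sum_ite_eq, Finset.sum_ite_eq'] using this

private lemma posdef_submatrix {n : ℕ} {M : Matrix (Fin n) (Fin n) ℝ} (hM : M.PosDef)
    (σ : Equiv.Perm (Fin n)) : (M.submatrix σ σ).PosDef := by
  refine Matrix.PosDef.of_dotProduct_mulVec_pos ?_ ?_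
  · ext i j
    simpa using hM.1.apply (σ i) (σ j)
  · intro x hx
    have hz : (x ∘ σ.symm) ≠ 0 := by
      intro h
      apply hx
      funext i
      have := congrFun h (σ i)
      simpa using this
    have := hM.dotProduct_mulVec_pos hz
    simp only [star_trivial, dotProduct, mulVec] at this ⊢
    rw [← Equiv.sum_comp σ (fun i => (x ∘ σ.symm) i * ∑ j, M i j * (x ∘ σ.symm) j)] at this
    convert this using 2 with i
    simp only [Function.comp, Equiv.symm_apply_apply, submatrix_apply]
    congr 1
    exact Fintype.sum_equiv σ _ _ (fun k => by simp)

private lemma prod_entry {n : ℕ} (L : Matrix (Fin n) (Fin n) ℝ) (δ : Fin n → ℝ) (i j : Fin n) :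
    ((1 - L) * Matrix.diagonal δ * (1 - L)ᵀ : Matrix (Fin n) (Fin n) ℝ) i j
      = ∑ k, (1 - L) i k * δ k * (1 - L) j k := by
  rw [Matrix.mul_assoc]
  simp only [Matrix.mul_apply, Matrix.diagonal_apply, Matrix.transpose_apply, ite_mul,
    zero_mul, Finset.sum_ite_eq, Finset.mem_univ, if_true]
  exact Finset.sum_congr rfl fun k _ => by ring

private lemma chol : ∀ (n : ℕ) (M : Matrix (Fin n) (Fin n) ℝ) (G : Fin n → Fin n → Prop),
    M.PosDef → (∀ i j, G i j → G j i) →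
    (∀ i j, M i j ≠ 0 → G i j) →
    (∀ i j k : Fin n, i < j → j < k → G j i → G k i → G k j) →
    ∃ (L : Matrix (Fin n) (Fin n) ℝ) (δ : Fin n → ℝ),
      (∀ i, L i i = 0) ∧ (∀ i j, L i j ≠ 0 → j < i) ∧
      (∀ i j, L i j ≠ 0 → G i j) ∧ (∀ i, 0 < δ i) ∧
      M = (1 - L) * Matrix.diagonal δ * (1 - L)ᵀ := by
  intro n
  induction n with
  | zero =>
    intro M G _ _ _ _
    exact ⟨0, fun _ => 1, fun i => i.elim0, fun i => i.elim0, fun i => i.elim0,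
      fun i => i.elim0, by ext i j; exact i.elim0⟩
  | succ d IH =>
    intro M G hPD hGsym hsupp hPEO
    have hMsym : ∀ i j, M i j = M j i := fun i j => by simpa using hPD.1.apply j i
    set a : ℝ := M 0 0 with ha_def
    have ha : 0 < a := posdef_diag_pos hPD 0
    have ha' : a ≠ 0 := ne_of_gt ha
    set b : Fin d → ℝ := fun i => M i.succ 0 with hb_def
    set S' : Matrix (Fin d) (Fin d) ℝ :=
      Matrix.of (fun i j => M i.succ j.succ - b i * b j / a) with hS'_def
    have hS'app : ∀ i j, S' i j = M i.succ j.succ - b i * b j / a := fun i j => rfl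
    have hdot : ∀ {m : ℕ} (N : Matrix (Fin m) (Fin m) ℝ) (z : Fin m → ℝ),
        dotProduct (star z) (N *ᵥ z) = ∑ i, ∑ j, z i * (N i j * z j) := by
      intro m N z
      simp [dotProduct, mulVec, Finset.mul_sum]
    have hS'PD : S'.PosDef := by
      refine Matrix.PosDef.of_dotProduct_mulVec_pos ?_ ?_
      · ext i j
        simp only [conjTranspose_apply, star_trivial, hS'app]
        rw [hMsym j.succ i.succ]
        ring
      · intro x hx
        set s : ℝ := ∑ i, b i * x i with hs_def
        set y : Fin (d + 1) → ℝ := Fin.cons (-(s / a)) x with hy_def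
        have hyne : y ≠ 0 := by
          obtain ⟨i, hi⟩ := Function.ne_iff.mp hx
          exact Function.ne_iff.mpr ⟨i.succ, by simpa [hy_def, Fin.cons_succ] using hi⟩
        have hexp : dotProduct (star y) (M *ᵥ y)
            = (∑ i, ∑ j, x i * (M i.succ j.succ * x j)) - s * s / a := by
          rw [hdot]
          simp only [Fin.sum_univ_succ, Fin.cons_zero, Fin.cons_succ, hy_def]
          rw [Finset.sum_add_distrib]
          have h1 : ∑ j, -(s / a) * (M 0 j.succ * x j) = -(s / a) * s := by
            calc ∑ j, -(s / a) * (M 0 j.succ * x j)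
                = ∑ j, -(s / a) * (b j * x j) :=
                  Finset.sum_congr rfl fun j _ => by rw [hMsym 0 j.succ]
              _ = -(s / a) * s := by rw [← Finset.mul_sum]
          have h2 : ∑ i, x i * (M i.succ 0 * -(s / a)) = s * -(s / a) := by
            calc ∑ i, x i * (M i.succ 0 * -(s / a))
                = ∑ i, (b i * x i) * -(s / a) := Finset.sum_congr rfl fun i _ => by ring
              _ = s * -(s / a) := by rw [← Finset.sum_mul]
          rw [h1, h2, ← ha_def]
          field_simp
          ring
        have hexp2 : dotProduct (star x) (S' *ᵥ x)
            = (∑ i, ∑ j, x i * (M i.succ j.succ * x j)) - s * s / a := by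
          rw [hdot]
          have e1 : ∀ i, ∑ j, x i * (S' i j * x j)
              = (∑ j, x i * (M i.succ j.succ * x j)) - (b i * x i) * (s / a) := by
            intro i
            calc ∑ j, x i * (S' i j * x j)
                = ∑ j, (x i * (M i.succ j.succ * x j) - (b i * x i / a) * (b j * x j)) :=
                  Finset.sum_congr rfl fun j _ => by rw [hS'app]; ring
              _ = (∑ j, x i * (M i.succ j.succ * x j)) - (b i * x i / a) * s := by
                  rw [Finset.sum_sub_distrib]
                  congr 1
                  rw [← Finset.mul_sum]
              _ = (∑ j, x i * (M i.succ j.succ * x j)) - (b i * x i) * (s / a) := by ring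
          calc ∑ i, ∑ j, x i * (S' i j * x j)
              = ∑ i, ((∑ j, x i * (M i.succ j.succ * x j)) - (b i * x i) * (s / a)) :=
                Finset.sum_congr rfl fun i _ => e1 i
            _ = (∑ i, ∑ j, x i * (M i.succ j.succ * x j)) - s * (s / a) := by
                rw [Finset.sum_sub_distrib]
                congr 1
                rw [← Finset.sum_mul]
            _ = (∑ i, ∑ j, x i * (M i.succ j.succ * x j)) - s * s / a := by ring
        rw [hexp2, ← hexp]
        exact hPD.dotProduct_mulVec_pos hyne
    obtain ⟨L', δ', hLd, hLlow, hLsupp, hδ', hEq⟩ :=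
      IH S' (fun i j => G i.succ j.succ) hS'PD
        (fun i j h => hGsym _ _ h)
        (by
          intro i j h
          rw [hS'app] at h
          by_cases hM0 : M i.succ j.succ ≠ 0
          · exact hsupp _ _ hM0
          · push_neg at hM0
            rw [hM0] at h
            have hb2 : b i ≠ 0 ∧ b j ≠ 0 := by
              constructor <;> intro h0 <;> apply h <;> simp [h0]
            have g1 : G i.succ 0 := hsupp _ _ hb2.1
            have g2 : G j.succ 0 := hsupp _ _ hb2.2
            rcases lt_trichotomy i j with hij | hij | hij
            · exact hGsym _ _ (hPEO 0 i.succ j.succ (Fin.succ_pos i)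
                (Fin.succ_lt_succ_iff.mpr hij) g1 g2)
            · subst hij
              exact hsupp _ _ (ne_of_gt (posdef_diag_pos hPD i.succ))
            · exact hPEO 0 j.succ i.succ (Fin.succ_pos j)
                (Fin.succ_lt_succ_iff.mpr hij) g2 g1)
        (fun i j k hij hjk h1 h2 => hPEO i.succ j.succ k.succ
          (Fin.succ_lt_succ_iff.mpr hij) (Fin.succ_lt_succ_iff.mpr hjk) h1 h2)
    refine ⟨Matrix.of (Fin.cons (fun _ => 0) (fun i => Fin.cons (-(b i / a)) (L' i))),
      Fin.cons a δ', ?_, ?_, ?_, ?_, ?_⟩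
    · intro i
      induction i using Fin.cases with
      | zero => simp
      | succ i => simp [hLd i]
    · intro i j h
      induction i using Fin.cases with
      | zero => simp at h
      | succ i =>
        induction j using Fin.cases with
        | zero => exact Fin.succ_pos i
        | succ j =>
          simp only [Matrix.of_apply, Fin.cons_succ] at h
          exact Fin.succ_lt_succ_iff.mpr (hLlow i j h)
    · intro i j h
      induction i using Fin.cases with
      | zero => simp at h
      | succ i =>
        induction j using Fin.cases with
        | zero =>
          simp only [Matrix.of_apply, Fin.cons_succ, Fin.cons_zero] at h
          have hbne : b i ≠ 0 := by intro h0; apply h; simp [h0]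
          exact hsupp _ _ hbne
        | succ j =>
          simp only [Matrix.of_apply, Fin.cons_succ] at h
          exact hLsupp i j h
    · intro i
      induction i using Fin.cases with
      | zero => simpa using ha
      | succ i => simpa using hδ' i
    · ext i j
      rw [prod_entry]
      have hzs : ∀ k : Fin d, ¬ ((0 : Fin (d+1)) = k.succ) := fun k => (Fin.succ_ne_zero k).symm
      induction i using Fin.cases with
      | zero =>
        induction j using Fin.cases with
        | zero =>
          simp [Fin.sum_univ_succ, Matrix.sub_apply, Matrix.one_apply, Fin.succ_ne_zero, hzs]
          rfl
        | succ j =>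
          simp only [Fin.sum_univ_succ, Matrix.sub_apply, Matrix.one_apply, Matrix.of_apply,
            Fin.cons_zero, Fin.cons_succ]
          rw [hMsym 0 j.succ]
          simp [Fin.succ_ne_zero, hzs]
          field_simp
          rfl
      | succ i =>
        induction j using Fin.cases with
        | zero =>
          simp only [Fin.sum_univ_succ, Matrix.sub_apply, Matrix.one_apply, Matrix.of_apply,
            Fin.cons_zero, Fin.cons_succ]
          simp [Fin.succ_ne_zero, hzs]
          field_simp
          rfl
        | succ j =>
          have hS := congrFun (congrFun hEq i) j
          rw [prod_entry] at hS
          rw [hS'app] at hS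
          simp only [Fin.sum_univ_succ, Matrix.sub_apply, Matrix.one_apply, Matrix.of_apply,
            Fin.cons_zero, Fin.cons_succ, Fin.succ_ne_zero, hzs, Fin.succ_inj, if_false]
          have hrw : ∑ k, ((if i = k then (1:ℝ) else 0) - L' i k) * δ' k
              * ((if j = k then (1:ℝ) else 0) - L' j k)
              = ∑ k, (1 - L') i k * δ' k * (1 - L') j k :=
            Finset.sum_congr rfl fun k _ => by simp [Matrix.sub_apply, Matrix.one_apply]
          rw [hrw, ← hS]
          field_simp
          ring

/-- A matrix is supported on a DAG: some permutation makes it strictly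
lower-triangular (nonzero entries only where `j < i` after reindexing). -/
def SupportedOnDag {d : ℕ} (B : Matrix (Fin d) (Fin d) ℝ) : Prop :=
  ∃ σ : Equiv.Perm (Fin d), ∀ i j : Fin d, B (σ i) (σ j) ≠ 0 → j < i

theorem oicid_stmt_10 (d : ℕ) (hd : 1 ≤ d)
    (Θ : Matrix (Fin d) (Fin d) ℝ) (hPD : Θ.PosDef)
    (hperm : ∃ σ : Equiv.Perm (Fin d), ∀ i j k : Fin d, i < j → j < k →
      Θ (σ j) (σ i) ≠ 0 → Θ (σ k) (σ i) ≠ 0 → Θ (σ k) (σ j) ≠ 0) :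
    ∃ (B : Matrix (Fin d) (Fin d) ℝ) (δ : Fin d → ℝ),
      (∀ i, B i i = 0) ∧ SupportedOnDag B ∧
      (∀ i j : Fin d, B i j ≠ 0 → Θ i j ≠ 0) ∧
      (∀ i, 0 < δ i) ∧
      Θ = (1 - B) * Matrix.diagonal δ * (1 - B)ᵀ := by
  obtain ⟨σ, hσ⟩ := hperm
  have hMPD : (Θ.submatrix σ σ).PosDef := posdef_submatrix hPD σ
  obtain ⟨L, δ, hLd, hLlow, hLsupp, hδ, hEq⟩ :=
    chol d (Θ.submatrix σ σ) (fun i j => Θ (σ i) (σ j) ≠ 0) hMPD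
      (fun i j h h0 => h (by
        have := hMPD.1.apply i j
        simp only [star_trivial, submatrix_apply] at this
        rw [← this, h0]))
      (fun i j h => h)
      (fun i j k hij hjk h1 h2 => hσ i j k hij hjk h1 h2)
  refine ⟨L.submatrix σ.symm σ.symm, fun i => δ (σ.symm i), ?_, ⟨σ, ?_⟩, ?_, ?_, ?_⟩
  · intro i
    exact hLd (σ.symm i)
  · intro i j h
    simp only [submatrix_apply, Equiv.symm_apply_apply] at h
    exact hLlow i j h
  · intro i j h
    simp only [submatrix_apply] at h
    have := hLsupp _ _ h
    simpa using this
  · intro i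
    exact hδ (σ.symm i)
  · ext i j
    rw [prod_entry]
    have hM := congrFun (congrFun hEq (σ.symm i)) (σ.symm j)
    rw [prod_entry] at hM
    simp only [submatrix_apply, Equiv.apply_symm_apply] at hM
    rw [hM]
    rw [← Equiv.sum_comp σ (fun k => (1 - L.submatrix σ.symm σ.symm) i k * δ (σ.symm k)
      * (1 - L.submatrix σ.symm σ.symm) j k)]
    refine Finset.sum_congr rfl fun k _ => ?_
    simp only [Matrix.sub_apply, Matrix.one_apply, submatrix_apply, Equiv.symm_apply_apply]
    congr 2 <;> · congr 1
                  simp [Equiv.eq_symm_apply, eq_comm]
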